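/- For every board B ⊆ [n]×[n] and every integer i ≥ 0: h_{WR,i−1}(B) + h_{WC,i−1}(B) − 2·h_{Z,i−1}(B) + 2·h_{S,i−1}(B) + (i(i+1)/2)·h_{i+1}(B) ≥ 0. -/
import Mathlib


/-- A set of cells is non-attacking if its cells have pairwise distinct rows
and pairwise distinct columns. -/
def nonattacking {m n : ℕ} (s : Finset (Fin m × Fin n)) : Prop :=
  ∀ p ∈ s, ∀ p' ∈ s, p ≠ p' → p.1 ≠ p'.1 ∧ p.2 ≠ p'.2

/-- The classical hit number: the number of non-attacking `n`-element subsets `σ` of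
`[n]×[n]` with `#(σ ∩ B) = i`. -/
noncomputable def hit {n : ℕ} (B : Finset (Fin n × Fin n)) (i : ℕ) : ℕ :=
  Nat.card {σ : Finset (Fin n × Fin n) // nonattacking σ ∧ σ.card = n ∧ (σ ∩ B).card = i}

/-- The generalized hit number `h_{Z,i}(B)` for the Z graph.  (It is `0` for `i < 0`.) -/
noncomputable def hitZ {n : ℕ} (B : Finset (Fin n × Fin n)) (i : ℤ) : ℕ :=
  Nat.card {σ : Finset (Fin n × Fin n) //
    ∃ (a d b c : Fin n) (τ : Finset (Fin n × Fin n)),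
      a ≠ d ∧ b ≠ c ∧ σ = {(a, b), (a, c), (d, c)} ∪ τ ∧
      ({(a, b), (a, c), (d, c)} : Finset (Fin n × Fin n)) ⊆ B ∧
      nonattacking τ ∧ τ.card = n - 2 ∧
      (∀ p ∈ τ, p.1 ≠ a ∧ p.1 ≠ d ∧ p.2 ≠ b ∧ p.2 ≠ c) ∧
      ((τ ∩ B).card : ℤ) = i}

/-- The generalized hit number `h_{S,i}(B)` for the shoelace graph `K_{2,2}`. -/
noncomputable def hitS {n : ℕ} (B : Finset (Fin n × Fin n)) (i : ℤ) : ℕ :=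
  Nat.card {σ : Finset (Fin n × Fin n) //
    ∃ (a d b c : Fin n) (τ : Finset (Fin n × Fin n)),
      a ≠ d ∧ b ≠ c ∧ σ = (({a, d} : Finset (Fin n)) ×ˢ ({b, c} : Finset (Fin n))) ∪ τ ∧
      (({a, d} : Finset (Fin n)) ×ˢ ({b, c} : Finset (Fin n))) ⊆ B ∧
      nonattacking τ ∧ τ.card = n - 2 ∧
      (∀ p ∈ τ, p.1 ≠ a ∧ p.1 ≠ d ∧ p.2 ≠ b ∧ p.2 ≠ c) ∧
      ((τ ∩ B).card : ℤ) = i}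

/-- The generalized hit number `h_{WR,i}(B)` for the wedge of two rows. -/
noncomputable def hitWR {n : ℕ} (B : Finset (Fin n × Fin n)) (i : ℤ) : ℕ :=
  Nat.card {σ : Finset (Fin n × Fin n) //
    ∃ (a d c : Fin n) (τ : Finset (Fin n × Fin n)),
      a ≠ d ∧ σ = {(a, c), (d, c)} ∪ τ ∧
      ({(a, c), (d, c)} : Finset (Fin n × Fin n)) ⊆ B ∧
      nonattacking τ ∧ τ.card = n - 2 ∧
      (∀ p ∈ τ, p.1 ≠ a ∧ p.1 ≠ d ∧ p.2 ≠ c) ∧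
      ((τ ∩ B).card : ℤ) = i}

/-- The generalized hit number `h_{WC,i}(B)` for the wedge of two columns. -/
noncomputable def hitWC {n : ℕ} (B : Finset (Fin n × Fin n)) (i : ℤ) : ℕ :=
  Nat.card {σ : Finset (Fin n × Fin n) //
    ∃ (a b c : Fin n) (τ : Finset (Fin n × Fin n)),
      b ≠ c ∧ σ = {(a, b), (a, c)} ∪ τ ∧
      ({(a, b), (a, c)} : Finset (Fin n × Fin n)) ⊆ B ∧
      nonattacking τ ∧ τ.card = n - 2 ∧
      (∀ p ∈ τ, p.1 ≠ a ∧ p.2 ≠ b ∧ p.2 ≠ c) ∧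
      ((τ ∩ B).card : ℤ) = i}

namespace SC
variable {n : ℕ}

abbrev Cell (n : ℕ) := Fin n × Fin n

lemma fin_two_le {a d : Fin n} (h : a ≠ d) : 2 ≤ n := by
  have ha := a.isLt; have hd := d.isLt
  have : a.val ≠ d.val := fun hv => h (Fin.val_injective hv)
  omega

lemma na_snd {τ : Finset (Cell n)} (h : nonattacking τ) {p q : Cell n}
    (hp : p ∈ τ) (hq : q ∈ τ) (hpq : p.2 = q.2) : p = q := by
  by_contra hne; exact (h p hp q hq hne).2 hpq

lemma na_fst {τ : Finset (Cell n)} (h : nonattacking τ) {p q : Cell n}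
    (hp : p ∈ τ) (hq : q ∈ τ) (hpq : p.1 = q.1) : p = q := by
  by_contra hne; exact (h p hp q hq hne).1 hpq

lemma pair_eq_of_lt_iff {b1 c1 b2 c2 : Fin n} (h1 : b1 ≠ c1) (h2 : b2 ≠ c2)
    (hset : ({b1, c1} : Finset (Fin n)) = {b2, c2}) (hlt : b1 < c1 ↔ b2 < c2) :
    b1 = b2 ∧ c1 = c2 := by
  have hb1 : b1 = b2 ∨ b1 = c2 := by
    have : b1 ∈ ({b2, c2} : Finset (Fin n)) := hset ▸ (by simp)
    simpa using this
  have hc1 : c1 = b2 ∨ c1 = c2 := by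
    have : c1 ∈ ({b2, c2} : Finset (Fin n)) := hset ▸ (by simp)
    simpa using this
  rcases hb1 with h | h
  · subst h
    rcases hc1 with h' | h'
    · exact absurd h'.symm h1
    · exact ⟨rfl, h'⟩
  · subst h
    rcases hc1 with h' | h'
    · subst h'
      rcases h1.lt_or_gt with hh | hh
      · exact absurd (hlt.mp hh) (lt_asymm hh)
      · exact absurd (hlt.mpr hh) (lt_asymm hh)
    · exact absurd h'.symm h1

/-- In a WR-type union, filtering away column `c` gives back `τ`. -/
lemma filter_ne_col {a d c : Fin n} {τ : Finset (Cell n)} (hav : ∀ p ∈ τ, p.2 ≠ c) :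
    (({(a, c), (d, c)} : Finset (Cell n)) ∪ τ).filter (fun p => p.2 ≠ c) = τ := by
  ext ⟨p1, p2⟩
  simp only [Finset.mem_filter, Finset.mem_union, Finset.mem_insert, Finset.mem_singleton,
    Prod.mk.injEq]
  constructor
  · rintro ⟨(⟨rfl, rfl⟩ | ⟨rfl, rfl⟩) | h, hne⟩
    · exact absurd rfl hne
    · exact absurd rfl hne
    · exact h
  · intro h
    exact ⟨Or.inr h, hav _ h⟩

lemma filter_eq_col {a d c : Fin n} {τ : Finset (Cell n)} (hav : ∀ p ∈ τ, p.2 ≠ c) :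
    (({(a, c), (d, c)} : Finset (Cell n)) ∪ τ).filter (fun p => p.2 = c) =
      ({(a, c), (d, c)} : Finset (Cell n)) := by
  ext ⟨p1, p2⟩
  simp only [Finset.mem_filter, Finset.mem_union, Finset.mem_insert, Finset.mem_singleton,
    Prod.mk.injEq]
  constructor
  · rintro ⟨(h | h) | h, hc⟩
    · exact Or.inl h
    · exact Or.inr h
    · exact absurd hc (hav _ h)
  · rintro (⟨rfl, rfl⟩ | ⟨rfl, rfl⟩)
    · exact ⟨Or.inl (Or.inl ⟨rfl, rfl⟩), rfl⟩
    · exact ⟨Or.inl (Or.inr ⟨rfl, rfl⟩), rfl⟩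

/-- Uniqueness of the representation of a WR-set. -/
lemma wr_rep_unique {a1 d1 b1 c1 a2 d2 b2 c2 : Fin n} {τ1 τ2 : Finset (Cell n)}
    (had1 : a1 ≠ d1) (had2 : a2 ≠ d2) (hbc1 : b1 ≠ c1) (hbc2 : b2 ≠ c2)
    (hna1 : nonattacking τ1) (hna2 : nonattacking τ2)
    (hcard1 : τ1.card = n - 2)
    (hav1 : ∀ p ∈ τ1, p.1 ≠ a1 ∧ p.1 ≠ d1 ∧ p.2 ≠ b1 ∧ p.2 ≠ c1)
    (hav2 : ∀ p ∈ τ2, p.1 ≠ a2 ∧ p.1 ≠ d2 ∧ p.2 ≠ b2 ∧ p.2 ≠ c2)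
    (heq : ({(a1, c1), (d1, c1)} : Finset (Cell n)) ∪ τ1 = {(a2, c2), (d2, c2)} ∪ τ2) :
    b1 = b2 ∧ c1 = c2 ∧ τ1 = τ2 ∧ (a1 = a2 ∧ d1 = d2 ∨ a1 = d2 ∧ d1 = a2) := by
  have hn2 : 2 ≤ n := fin_two_le had1
  -- c1 = c2
  have hc : c1 = c2 := by
    by_contra hc
    have h1 : ((a1 : Fin n), c1) ∈ ({(a2, c2), (d2, c2)} : Finset (Cell n)) ∪ τ2 := by
      rw [← heq]; simp
    have h2 : ((d1 : Fin n), c1) ∈ ({(a2, c2), (d2, c2)} : Finset (Cell n)) ∪ τ2 := by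
      rw [← heq]; simp
    have m1 : ((a1 : Fin n), c1) ∈ τ2 := by
      simp only [Finset.mem_union, Finset.mem_insert, Finset.mem_singleton, Prod.mk.injEq] at h1
      rcases h1 with (⟨_, h⟩ | ⟨_, h⟩) | h
      · exact absurd h hc
      · exact absurd h hc
      · exact h
    have m2 : ((d1 : Fin n), c1) ∈ τ2 := by
      simp only [Finset.mem_union, Finset.mem_insert, Finset.mem_singleton, Prod.mk.injEq] at h2
      rcases h2 with (⟨_, h⟩ | ⟨_, h⟩) | h
      · exact absurd h hc
      · exact absurd h hc
      · exact h
    exact had1 (congrArg Prod.fst (na_snd hna2 m1 m2 rfl))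
  subst hc
  -- τ1 = τ2
  have hτ : τ1 = τ2 := by
    have e1 := filter_ne_col (a := a1) (d := d1) (fun p hp => (hav1 p hp).2.2.2)
    have e2 := filter_ne_col (a := a2) (d := d2) (fun p hp => (hav2 p hp).2.2.2)
    rw [← e1, heq, e2]
  -- pattern equality
  have hpat : ({(a1, c1), (d1, c1)} : Finset (Cell n)) = {(a2, c1), (d2, c1)} := by
    have e1 := filter_eq_col (a := a1) (d := d1) (fun p hp => (hav1 p hp).2.2.2)
    have e2 := filter_eq_col (a := a2) (d := d2) (fun p hp => (hav2 p hp).2.2.2)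
    rw [← e1, heq, e2]
  have ha1 : a1 = a2 ∨ a1 = d2 := by
    have : ((a1 : Fin n), c1) ∈ ({(a2, c1), (d2, c1)} : Finset (Cell n)) := hpat ▸ (by simp)
    simpa [Prod.ext_iff] using this
  have hd1 : d1 = a2 ∨ d1 = d2 := by
    have : ((d1 : Fin n), c1) ∈ ({(a2, c1), (d2, c1)} : Finset (Cell n)) := hpat ▸ (by simp)
    simpa [Prod.ext_iff] using this
  -- b1 = b2
  have hb : b1 = b2 := by
    by_contra hb
    have himg : ((({(a1, c1), (d1, c1)} : Finset (Cell n)) ∪ τ1).image Prod.snd).card = n - 1 := by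
      have h1 : (({(a1, c1), (d1, c1)} : Finset (Cell n)) ∪ τ1).image Prod.snd =
          insert c1 (τ1.image Prod.snd) := by
        rw [Finset.image_union]
        ext y; simp [Finset.image_insert]
      rw [h1, Finset.card_insert_of_notMem, Finset.card_image_of_injOn]
      · omega
      · intro p hp q hq hpq
        exact na_snd hna1 hp hq hpq
      · simp only [Finset.mem_image, not_exists]
        intro p hp
        exact (hav1 p hp.1).2.2.2 hp.2
    have hsub : (({(a1, c1), (d1, c1)} : Finset (Cell n)) ∪ τ1).image Prod.snd ⊆
        Finset.univ \ {b1, b2} := by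
      intro y hy
      simp only [Finset.mem_image] at hy
      obtain ⟨p, hp, rfl⟩ := hy
      simp only [Finset.mem_sdiff, Finset.mem_univ, Finset.mem_insert, Finset.mem_singleton,
        true_and]
      refine not_or.mpr ⟨?_, ?_⟩
      · -- p.2 ≠ b1 via rep 1
        rcases Finset.mem_union.mp hp with h | h
        · simp only [Finset.mem_insert, Finset.mem_singleton] at h
          rcases h with rfl | rfl
          · exact fun hh => hbc1 hh.symm
          · exact fun hh => hbc1 hh.symm
        · exact fun hh => (hav1 p h).2.2.1 hh
      · -- p.2 ≠ b2 via rep 2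
        rw [heq] at hp
        rcases Finset.mem_union.mp hp with h | h
        · simp only [Finset.mem_insert, Finset.mem_singleton] at h
          rcases h with rfl | rfl
          · exact fun hh => hbc2 hh.symm
          · exact fun hh => hbc2 hh.symm
        · exact fun hh => (hav2 p h).2.2.1 hh
    have hcard2 : (Finset.univ \ ({b1, b2} : Finset (Fin n))).card = n - 2 := by
      rw [Finset.card_sdiff_of_subset (Finset.subset_univ _)]
      rw [Finset.card_insert_of_notMem (by simpa using hb), Finset.card_singleton]
      simp
    have := Finset.card_le_card hsub
    rw [himg, hcard2] at this
    omega
  refine ⟨hb, rfl, hτ, ?_⟩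
  rcases ha1 with h | h
  · subst h
    rcases hd1 with h' | h'
    · exact absurd h'.symm had1
    · exact Or.inl ⟨rfl, h'⟩
  · subst h
    rcases hd1 with h' | h'
    · exact Or.inr ⟨rfl, h'⟩
    · exact absurd h'.symm had1


lemma col_sub {a1 d1 b1 c1 a2 d2 b2 c2 : Fin n} {τ1 τ2 : Finset (Cell n)}
    (had1 : a1 ≠ d1) (hna2 : nonattacking τ2)
    (heq : ((({a1, d1} : Finset (Fin n)) ×ˢ ({b1, c1} : Finset (Fin n))) : Finset (Cell n)) ∪ τ1 =
      (({a2, d2} : Finset (Fin n)) ×ˢ ({b2, c2} : Finset (Fin n))) ∪ τ2) :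
    ({b1, c1} : Finset (Fin n)) ⊆ {b2, c2} := by
  intro x hx
  by_contra hx2
  have h1 : ((a1 : Fin n), x) ∈ (({a2, d2} : Finset (Fin n)) ×ˢ ({b2, c2} : Finset (Fin n))) ∪ τ2 := by
    rw [← heq]
    exact Finset.mem_union_left _ (Finset.mem_product.mpr ⟨by simp, hx⟩)
  have h2 : ((d1 : Fin n), x) ∈ (({a2, d2} : Finset (Fin n)) ×ˢ ({b2, c2} : Finset (Fin n))) ∪ τ2 := by
    rw [← heq]
    exact Finset.mem_union_left _ (Finset.mem_product.mpr ⟨by simp, hx⟩)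
  have m1 : ((a1 : Fin n), x) ∈ τ2 := by
    rcases Finset.mem_union.mp h1 with h | h
    · exact absurd (Finset.mem_product.mp h).2 hx2
    · exact h
  have m2 : ((d1 : Fin n), x) ∈ τ2 := by
    rcases Finset.mem_union.mp h2 with h | h
    · exact absurd (Finset.mem_product.mp h).2 hx2
    · exact h
  exact had1 (congrArg Prod.fst (na_snd hna2 m1 m2 rfl))

lemma row_sub {a1 d1 b1 c1 a2 d2 b2 c2 : Fin n} {τ1 τ2 : Finset (Cell n)}
    (hbc1 : b1 ≠ c1) (hna2 : nonattacking τ2)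
    (heq : ((({a1, d1} : Finset (Fin n)) ×ˢ ({b1, c1} : Finset (Fin n))) : Finset (Cell n)) ∪ τ1 =
      (({a2, d2} : Finset (Fin n)) ×ˢ ({b2, c2} : Finset (Fin n))) ∪ τ2) :
    ({a1, d1} : Finset (Fin n)) ⊆ {a2, d2} := by
  intro x hx
  by_contra hx2
  have h1 : ((x : Fin n), b1) ∈ (({a2, d2} : Finset (Fin n)) ×ˢ ({b2, c2} : Finset (Fin n))) ∪ τ2 := by
    rw [← heq]
    exact Finset.mem_union_left _ (Finset.mem_product.mpr ⟨hx, by simp⟩)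
  have h2 : ((x : Fin n), c1) ∈ (({a2, d2} : Finset (Fin n)) ×ˢ ({b2, c2} : Finset (Fin n))) ∪ τ2 := by
    rw [← heq]
    exact Finset.mem_union_left _ (Finset.mem_product.mpr ⟨hx, by simp⟩)
  have m1 : ((x : Fin n), b1) ∈ τ2 := by
    rcases Finset.mem_union.mp h1 with h | h
    · exact absurd (Finset.mem_product.mp h).1 hx2
    · exact h
  have m2 : ((x : Fin n), c1) ∈ τ2 := by
    rcases Finset.mem_union.mp h2 with h | h
    · exact absurd (Finset.mem_product.mp h).1 hx2
    · exact h
  exact hbc1 (congrArg Prod.snd (na_fst hna2 m1 m2 rfl))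

lemma filter_block {a d b c : Fin n} {τ : Finset (Cell n)}
    (hav : ∀ p ∈ τ, p.2 ≠ b ∧ p.2 ≠ c) :
    (((({a, d} : Finset (Fin n)) ×ˢ ({b, c} : Finset (Fin n))) : Finset (Cell n)) ∪ τ).filter
      (fun p => p.2 ∉ ({b, c} : Finset (Fin n))) = τ := by
  ext p
  simp only [Finset.mem_filter, Finset.mem_union, Finset.mem_product, Finset.mem_insert,
    Finset.mem_singleton]
  constructor
  · rintro ⟨h | h, hne⟩
    · exact absurd h.2 hne
    · exact h
  · intro h
    refine ⟨Or.inr h, ?_⟩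
    rcases hav p h with ⟨h1, h2⟩
    rintro (hh | hh) <;> [exact h1 hh; exact h2 hh]

/-- Uniqueness of the representation of an S-set. -/
lemma s_rep_unique {a1 d1 b1 c1 a2 d2 b2 c2 : Fin n} {τ1 τ2 : Finset (Cell n)}
    (had1 : a1 ≠ d1) (had2 : a2 ≠ d2) (hbc1 : b1 ≠ c1) (hbc2 : b2 ≠ c2)
    (hna1 : nonattacking τ1) (hna2 : nonattacking τ2)
    (hav1 : ∀ p ∈ τ1, p.1 ≠ a1 ∧ p.1 ≠ d1 ∧ p.2 ≠ b1 ∧ p.2 ≠ c1)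
    (hav2 : ∀ p ∈ τ2, p.1 ≠ a2 ∧ p.1 ≠ d2 ∧ p.2 ≠ b2 ∧ p.2 ≠ c2)
    (heq : ((({a1, d1} : Finset (Fin n)) ×ˢ ({b1, c1} : Finset (Fin n))) : Finset (Cell n)) ∪ τ1 =
      (({a2, d2} : Finset (Fin n)) ×ˢ ({b2, c2} : Finset (Fin n))) ∪ τ2) :
    ({b1, c1} : Finset (Fin n)) = {b2, c2} ∧ ({a1, d1} : Finset (Fin n)) = {a2, d2} ∧ τ1 = τ2 := by
  have hcols : ({b1, c1} : Finset (Fin n)) = {b2, c2} :=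
    Finset.Subset.antisymm (col_sub had1 hna2 heq) (col_sub had2 hna1 heq.symm)
  have hrows : ({a1, d1} : Finset (Fin n)) = {a2, d2} :=
    Finset.Subset.antisymm (row_sub hbc1 hna2 heq) (row_sub hbc2 hna1 heq.symm)
  refine ⟨hcols, hrows, ?_⟩
  have e1 := filter_block (a := a1) (d := d1) (τ := τ1)
    (fun p hp => ⟨(hav1 p hp).2.2.1, (hav1 p hp).2.2.2⟩)
  have e2 := filter_block (a := a2) (d := d2) (τ := τ2)
    (fun p hp => ⟨(hav2 p hp).2.2.1, (hav2 p hp).2.2.2⟩)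
  rw [← e1, heq, hcols, e2]

lemma filter_ne_row {a b c : Fin n} {τ : Finset (Cell n)} (hav : ∀ p ∈ τ, p.1 ≠ a) :
    (({(a, b), (a, c)} : Finset (Cell n)) ∪ τ).filter (fun p => p.1 ≠ a) = τ := by
  ext ⟨p1, p2⟩
  simp only [Finset.mem_filter, Finset.mem_union, Finset.mem_insert, Finset.mem_singleton,
    Prod.mk.injEq]
  constructor
  · rintro ⟨(⟨rfl, rfl⟩ | ⟨rfl, rfl⟩) | h, hne⟩
    · exact absurd rfl hne
    · exact absurd rfl hne
    · exact h
  · intro h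
    exact ⟨Or.inr h, hav _ h⟩

lemma filter_eq_row {a b c : Fin n} {τ : Finset (Cell n)} (hav : ∀ p ∈ τ, p.1 ≠ a) :
    (({(a, b), (a, c)} : Finset (Cell n)) ∪ τ).filter (fun p => p.1 = a) =
      ({(a, b), (a, c)} : Finset (Cell n)) := by
  ext ⟨p1, p2⟩
  simp only [Finset.mem_filter, Finset.mem_union, Finset.mem_insert, Finset.mem_singleton,
    Prod.mk.injEq]
  constructor
  · rintro ⟨(h | h) | h, hc⟩
    · exact Or.inl h
    · exact Or.inr h
    · exact absurd hc (hav _ h)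
  · rintro (⟨rfl, rfl⟩ | ⟨rfl, rfl⟩)
    · exact ⟨Or.inl (Or.inl ⟨rfl, rfl⟩), rfl⟩
    · exact ⟨Or.inl (Or.inr ⟨rfl, rfl⟩), rfl⟩

/-- Uniqueness of the representation of a WC-set. -/
lemma wc_rep_unique {a1 d1 b1 c1 a2 d2 b2 c2 : Fin n} {τ1 τ2 : Finset (Cell n)}
    (had1 : a1 ≠ d1) (had2 : a2 ≠ d2) (hbc1 : b1 ≠ c1) (hbc2 : b2 ≠ c2)
    (hna1 : nonattacking τ1) (hna2 : nonattacking τ2)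
    (hcard1 : τ1.card = n - 2)
    (hav1 : ∀ p ∈ τ1, p.1 ≠ a1 ∧ p.1 ≠ d1 ∧ p.2 ≠ b1 ∧ p.2 ≠ c1)
    (hav2 : ∀ p ∈ τ2, p.1 ≠ a2 ∧ p.1 ≠ d2 ∧ p.2 ≠ b2 ∧ p.2 ≠ c2)
    (heq : ({(a1, b1), (a1, c1)} : Finset (Cell n)) ∪ τ1 = {(a2, b2), (a2, c2)} ∪ τ2) :
    d1 = d2 ∧ a1 = a2 ∧ τ1 = τ2 ∧ (b1 = b2 ∧ c1 = c2 ∨ b1 = c2 ∧ c1 = b2) := by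
  have hn2 : 2 ≤ n := fin_two_le had1
  have ha : a1 = a2 := by
    by_contra ha
    have h1 : ((a1 : Fin n), b1) ∈ ({(a2, b2), (a2, c2)} : Finset (Cell n)) ∪ τ2 := by
      rw [← heq]; simp
    have h2 : ((a1 : Fin n), c1) ∈ ({(a2, b2), (a2, c2)} : Finset (Cell n)) ∪ τ2 := by
      rw [← heq]; simp
    have m1 : ((a1 : Fin n), b1) ∈ τ2 := by
      simp only [Finset.mem_union, Finset.mem_insert, Finset.mem_singleton, Prod.mk.injEq] at h1
      rcases h1 with (⟨h, _⟩ | ⟨h, _⟩) | h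
      · exact absurd h ha
      · exact absurd h ha
      · exact h
    have m2 : ((a1 : Fin n), c1) ∈ τ2 := by
      simp only [Finset.mem_union, Finset.mem_insert, Finset.mem_singleton, Prod.mk.injEq] at h2
      rcases h2 with (⟨h, _⟩ | ⟨h, _⟩) | h
      · exact absurd h ha
      · exact absurd h ha
      · exact h
    exact hbc1 (congrArg Prod.snd (na_fst hna2 m1 m2 rfl))
  subst ha
  have hτ : τ1 = τ2 := by
    have e1 := filter_ne_row (b := b1) (c := c1) (fun p hp => (hav1 p hp).1)
    have e2 := filter_ne_row (b := b2) (c := c2) (fun p hp => (hav2 p hp).1)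
    rw [← e1, heq, e2]
  have hpat : ({(a1, b1), (a1, c1)} : Finset (Cell n)) = {(a1, b2), (a1, c2)} := by
    have e1 := filter_eq_row (b := b1) (c := c1) (fun p hp => (hav1 p hp).1)
    have e2 := filter_eq_row (b := b2) (c := c2) (fun p hp => (hav2 p hp).1)
    rw [← e1, heq, e2]
  have hb1 : b1 = b2 ∨ b1 = c2 := by
    have : ((a1 : Fin n), b1) ∈ ({(a1, b2), (a1, c2)} : Finset (Cell n)) := hpat ▸ (by simp)
    simpa [Prod.ext_iff] using this
  have hc1 : c1 = b2 ∨ c1 = c2 := by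
    have : ((a1 : Fin n), c1) ∈ ({(a1, b2), (a1, c2)} : Finset (Cell n)) := hpat ▸ (by simp)
    simpa [Prod.ext_iff] using this
  have hd : d1 = d2 := by
    by_contra hd
    have himg : ((({(a1, b1), (a1, c1)} : Finset (Cell n)) ∪ τ1).image Prod.fst).card = n - 1 := by
      have h1 : (({(a1, b1), (a1, c1)} : Finset (Cell n)) ∪ τ1).image Prod.fst =
          insert a1 (τ1.image Prod.fst) := by
        rw [Finset.image_union]
        ext y; simp [Finset.image_insert]
      rw [h1, Finset.card_insert_of_notMem, Finset.card_image_of_injOn]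
      · omega
      · intro p hp q hq hpq
        exact na_fst hna1 hp hq hpq
      · simp only [Finset.mem_image, not_exists]
        intro p hp
        exact (hav1 p hp.1).1 hp.2
    have hsub : (({(a1, b1), (a1, c1)} : Finset (Cell n)) ∪ τ1).image Prod.fst ⊆
        Finset.univ \ {d1, d2} := by
      intro y hy
      simp only [Finset.mem_image] at hy
      obtain ⟨p, hp, rfl⟩ := hy
      simp only [Finset.mem_sdiff, Finset.mem_univ, Finset.mem_insert, Finset.mem_singleton,
        true_and]
      refine not_or.mpr ⟨?_, ?_⟩
      · rcases Finset.mem_union.mp hp with h | h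
        · simp only [Finset.mem_insert, Finset.mem_singleton] at h
          rcases h with rfl | rfl
          · simpa using had1
          · simpa using had1
        · exact fun hh => (hav1 p h).2.1 hh
      · rw [heq] at hp
        rcases Finset.mem_union.mp hp with h | h
        · simp only [Finset.mem_insert, Finset.mem_singleton] at h
          rcases h with rfl | rfl
          · simpa using had2
          · simpa using had2
        · exact fun hh => (hav2 p h).2.1 hh
    have hcard2 : (Finset.univ \ ({d1, d2} : Finset (Fin n))).card = n - 2 := by
      rw [Finset.card_sdiff_of_subset (Finset.subset_univ _)]
      rw [Finset.card_insert_of_notMem (by simpa using hd), Finset.card_singleton]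
      simp
    have := Finset.card_le_card hsub
    rw [himg, hcard2] at this
    omega
  refine ⟨hd, rfl, hτ, ?_⟩
  rcases hb1 with h | h
  · subst h
    rcases hc1 with h' | h'
    · exact absurd h'.symm hbc1
    · exact Or.inl ⟨rfl, h'⟩
  · subst h
    rcases hc1 with h' | h'
    · exact Or.inr ⟨rfl, h'⟩
    · exact absurd h'.symm hbc1

/-! ### Predicates matching the hit number definitions -/

def ZP (B : Finset (Cell n)) (j : ℤ) (σ : Finset (Cell n)) : Prop :=
  ∃ (a d b c : Fin n) (τ : Finset (Fin n × Fin n)),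
      a ≠ d ∧ b ≠ c ∧ σ = {(a, b), (a, c), (d, c)} ∪ τ ∧
      ({(a, b), (a, c), (d, c)} : Finset (Fin n × Fin n)) ⊆ B ∧
      nonattacking τ ∧ τ.card = n - 2 ∧
      (∀ p ∈ τ, p.1 ≠ a ∧ p.1 ≠ d ∧ p.2 ≠ b ∧ p.2 ≠ c) ∧
      ((τ ∩ B).card : ℤ) = j

def SP (B : Finset (Cell n)) (j : ℤ) (σ : Finset (Cell n)) : Prop :=
  ∃ (a d b c : Fin n) (τ : Finset (Fin n × Fin n)),
      a ≠ d ∧ b ≠ c ∧ σ = (({a, d} : Finset (Fin n)) ×ˢ ({b, c} : Finset (Fin n))) ∪ τ ∧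
      (({a, d} : Finset (Fin n)) ×ˢ ({b, c} : Finset (Fin n))) ⊆ B ∧
      nonattacking τ ∧ τ.card = n - 2 ∧
      (∀ p ∈ τ, p.1 ≠ a ∧ p.1 ≠ d ∧ p.2 ≠ b ∧ p.2 ≠ c) ∧
      ((τ ∩ B).card : ℤ) = j

def WRP (B : Finset (Cell n)) (j : ℤ) (σ : Finset (Cell n)) : Prop :=
  ∃ (a d c : Fin n) (τ : Finset (Fin n × Fin n)),
      a ≠ d ∧ σ = {(a, c), (d, c)} ∪ τ ∧
      ({(a, c), (d, c)} : Finset (Fin n × Fin n)) ⊆ B ∧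
      nonattacking τ ∧ τ.card = n - 2 ∧
      (∀ p ∈ τ, p.1 ≠ a ∧ p.1 ≠ d ∧ p.2 ≠ c) ∧
      ((τ ∩ B).card : ℤ) = j

def WCP (B : Finset (Cell n)) (j : ℤ) (σ : Finset (Cell n)) : Prop :=
  ∃ (a b c : Fin n) (τ : Finset (Fin n × Fin n)),
      b ≠ c ∧ σ = {(a, b), (a, c)} ∪ τ ∧
      ({(a, b), (a, c)} : Finset (Fin n × Fin n)) ⊆ B ∧
      nonattacking τ ∧ τ.card = n - 2 ∧
      (∀ p ∈ τ, p.1 ≠ a ∧ p.2 ≠ b ∧ p.2 ≠ c) ∧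
      ((τ ∩ B).card : ℤ) = j

def ZData (B : Finset (Cell n)) (j : ℤ) (a d b c : Fin n) (τ σ : Finset (Cell n)) : Prop :=
  a ≠ d ∧ b ≠ c ∧ σ = {(a, b), (a, c), (d, c)} ∪ τ ∧
      ({(a, b), (a, c), (d, c)} : Finset (Fin n × Fin n)) ⊆ B ∧
      nonattacking τ ∧ τ.card = n - 2 ∧
      (∀ p ∈ τ, p.1 ≠ a ∧ p.1 ≠ d ∧ p.2 ≠ b ∧ p.2 ≠ c) ∧
      ((τ ∩ B).card : ℤ) = j

section ZFuncs
variable {B : Finset (Cell n)} {j : ℤ}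

noncomputable def zA (x : {σ : Finset (Cell n) // ZP B j σ}) : Fin n := x.2.choose
noncomputable def zD (x : {σ : Finset (Cell n) // ZP B j σ}) : Fin n := x.2.choose_spec.choose
noncomputable def zB (x : {σ : Finset (Cell n) // ZP B j σ}) : Fin n :=
  x.2.choose_spec.choose_spec.choose
noncomputable def zC (x : {σ : Finset (Cell n) // ZP B j σ}) : Fin n :=
  x.2.choose_spec.choose_spec.choose_spec.choose
noncomputable def zT (x : {σ : Finset (Cell n) // ZP B j σ}) : Finset (Cell n) :=
  x.2.choose_spec.choose_spec.choose_spec.choose_spec.choose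

lemma zSpec (x : {σ : Finset (Cell n) // ZP B j σ}) :
    ZData B j (zA x) (zD x) (zB x) (zC x) (zT x) x.1 :=
  x.2.choose_spec.choose_spec.choose_spec.choose_spec.choose_spec

/-! ### Structural lemmas about a Z-decomposition -/

variable {a d b c : Fin n} {τ σ : Finset (Cell n)}

lemma z_sdiff_ab (h : ZData B j a d b c τ σ) :
    σ \ {(a, b)} = ({(a, c), (d, c)} : Finset (Cell n)) ∪ τ := by
  obtain ⟨had, hbc, hσ, hB, hna, hcard, hav, hj⟩ := h
  subst hσ
  ext ⟨p1, p2⟩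
  simp only [Finset.mem_sdiff, Finset.mem_union, Finset.mem_insert, Finset.mem_singleton,
    Prod.mk.injEq]
  constructor
  · rintro ⟨(⟨rfl, rfl⟩ | ⟨rfl, rfl⟩ | ⟨rfl, rfl⟩) | h, hne⟩
    · exact absurd ⟨rfl, rfl⟩ hne
    · exact Or.inl (Or.inl ⟨rfl, rfl⟩)
    · exact Or.inl (Or.inr ⟨rfl, rfl⟩)
    · exact Or.inr h
  · rintro ((⟨rfl, rfl⟩ | ⟨rfl, rfl⟩) | h)
    · exact ⟨Or.inl (Or.inr (Or.inl ⟨rfl, rfl⟩)), fun hh => hbc hh.2.symm⟩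
    · exact ⟨Or.inl (Or.inr (Or.inr ⟨rfl, rfl⟩)), fun hh => had hh.1.symm⟩
    · exact ⟨Or.inr h, fun hh => (hav _ h).1 hh.1⟩

lemma z_sdiff_dc (h : ZData B j a d b c τ σ) :
    σ \ {(d, c)} = ({(a, b), (a, c)} : Finset (Cell n)) ∪ τ := by
  obtain ⟨had, hbc, hσ, hB, hna, hcard, hav, hj⟩ := h
  subst hσ
  ext ⟨p1, p2⟩
  simp only [Finset.mem_sdiff, Finset.mem_union, Finset.mem_insert, Finset.mem_singleton,
    Prod.mk.injEq]
  constructor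
  · rintro ⟨(⟨rfl, rfl⟩ | ⟨rfl, rfl⟩ | ⟨rfl, rfl⟩) | h, hne⟩
    · exact Or.inl (Or.inl ⟨rfl, rfl⟩)
    · exact Or.inl (Or.inr ⟨rfl, rfl⟩)
    · exact absurd ⟨rfl, rfl⟩ hne
    · exact Or.inr h
  · rintro ((⟨rfl, rfl⟩ | ⟨rfl, rfl⟩) | h)
    · exact ⟨Or.inl (Or.inl ⟨rfl, rfl⟩), fun hh => had hh.1⟩
    · exact ⟨Or.inl (Or.inr (Or.inl ⟨rfl, rfl⟩)), fun hh => had hh.1⟩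
    · exact ⟨Or.inr h, fun hh => (hav _ h).2.1 hh.1⟩

lemma z_union_db (h : ZData B j a d b c τ σ) :
    σ ∪ {(d, b)} = ((({a, d} : Finset (Fin n)) ×ˢ ({b, c} : Finset (Fin n))) : Finset (Cell n)) ∪ τ := by
  obtain ⟨had, hbc, hσ, hB, hna, hcard, hav, hj⟩ := h
  subst hσ
  ext ⟨p1, p2⟩
  simp only [Finset.mem_union, Finset.mem_insert, Finset.mem_singleton, Finset.mem_product,
    Prod.mk.injEq]
  tauto

lemma z_mem_ab (h : ZData B j a d b c τ σ) : (a, b) ∈ σ := by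
  obtain ⟨had, hbc, hσ, _⟩ := h
  subst hσ; simp

lemma z_mem_dc (h : ZData B j a d b c τ σ) : (d, c) ∈ σ := by
  obtain ⟨had, hbc, hσ, _⟩ := h
  subst hσ; simp

lemma z_notmem_db (h : ZData B j a d b c τ σ) : (d, b) ∉ σ := by
  obtain ⟨had, hbc, hσ, hB, hna, hcard, hav, hj⟩ := h
  subst hσ
  simp only [Finset.mem_union, Finset.mem_insert, Finset.mem_singleton, Prod.mk.injEq, not_or]
  exact ⟨⟨fun hh => had hh.1.symm, fun hh => had hh.1.symm, fun hh => hbc hh.2⟩,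
    fun hh => (hav _ hh).2.1 rfl⟩

lemma zp_wr (h : ZData B j a d b c τ σ) : WRP B j (σ \ {(a, b)}) := by
  obtain ⟨had, hbc, hσ, hB, hna, hcard, hav, hj⟩ := h
  refine ⟨a, d, c, τ, had, z_sdiff_ab ⟨had, hbc, hσ, hB, hna, hcard, hav, hj⟩, ?_, hna, hcard,
    fun p hp => ⟨(hav p hp).1, (hav p hp).2.1, (hav p hp).2.2.2⟩, hj⟩
  intro p hp
  apply hB
  simp only [Finset.mem_insert, Finset.mem_singleton] at hp ⊢
  tauto

lemma zp_wc (h : ZData B j a d b c τ σ) : WCP B j (σ \ {(d, c)}) := by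
  obtain ⟨had, hbc, hσ, hB, hna, hcard, hav, hj⟩ := h
  refine ⟨a, b, c, τ, hbc, z_sdiff_dc ⟨had, hbc, hσ, hB, hna, hcard, hav, hj⟩, ?_, hna, hcard,
    fun p hp => ⟨(hav p hp).1, (hav p hp).2.2.1, (hav p hp).2.2.2⟩, hj⟩
  intro p hp
  apply hB
  simp only [Finset.mem_insert, Finset.mem_singleton] at hp ⊢
  tauto

lemma zp_s (h : ZData B j a d b c τ σ) (hdb : (d, b) ∈ B) : SP B j (σ ∪ {(d, b)}) := by
  obtain ⟨had, hbc, hσ, hB, hna, hcard, hav, hj⟩ := h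
  have hab : (a, b) ∈ B := hB (by simp)
  have hac : (a, c) ∈ B := hB (by simp)
  have hdc : (d, c) ∈ B := hB (by simp)
  refine ⟨a, d, b, c, τ, had, hbc,
    z_union_db ⟨had, hbc, hσ, hB, hna, hcard, hav, hj⟩, ?_, hna, hcard, hav, hj⟩
  rintro ⟨p1, p2⟩ hp
  rw [Finset.mem_product] at hp
  simp only [Finset.mem_insert, Finset.mem_singleton] at hp
  obtain ⟨rfl | rfl, rfl | rfl⟩ := hp <;> assumption

end ZFuncs

/-! ### Counting identities -/

lemma hitZ_eq (B : Finset (Cell n)) (j : ℤ) :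
    hitZ B j = Nat.card {σ : Finset (Cell n) // ZP B j σ} := rfl
lemma hitS_eq (B : Finset (Cell n)) (j : ℤ) :
    hitS B j = Nat.card {σ : Finset (Cell n) // SP B j σ} := rfl
lemma hitWR_eq (B : Finset (Cell n)) (j : ℤ) :
    hitWR B j = Nat.card {σ : Finset (Cell n) // WRP B j σ} := rfl
lemma hitWC_eq (B : Finset (Cell n)) (j : ℤ) :
    hitWC B j = Nat.card {σ : Finset (Cell n) // WCP B j σ} := rfl

section Maps
variable {B : Finset (Cell n)} {j : ℤ}

/-- The common `inr`-branch argument. -/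
lemma z_inr_eq {a1 d1 b1 c1 a2 d2 b2 c2 : Fin n} {τ1 τ2 σ1 σ2 : Finset (Cell n)}
    (h1 : ZData B j a1 d1 b1 c1 τ1 σ1) (h2 : ZData B j a2 d2 b2 c2 τ2 σ2)
    (hS : σ1 ∪ {(d1, b1)} = σ2 ∪ {(d2, b2)})
    (hiff1 : b1 < c1 ↔ b2 < c2) (hiff2 : d1 < a1 ↔ d2 < a2) : σ1 = σ2 := by
  have hu1 := z_union_db h1
  have hu2 := z_union_db h2
  have heq := hu1.symm.trans (hS.trans hu2)
  obtain ⟨had1, hbc1, hσ1, hB1, hna1, hcard1, hav1, hj1⟩ := h1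
  obtain ⟨had2, hbc2, hσ2, hB2, hna2, hcard2, hav2, hj2⟩ := h2
  obtain ⟨hcols, hrows, hτ⟩ := s_rep_unique had1 had2 hbc1 hbc2 hna1 hna2 hav1 hav2 heq
  obtain ⟨hb, hc⟩ := pair_eq_of_lt_iff hbc1 hbc2 hcols hiff1
  have hrows' : ({d1, a1} : Finset (Fin n)) = {d2, a2} := by
    rw [Finset.pair_comm d1 a1, Finset.pair_comm d2 a2]; exact hrows
  obtain ⟨hd, ha⟩ := pair_eq_of_lt_iff (Ne.symm had1) (Ne.symm had2) hrows' hiff2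
  subst hb; subst hc; subst hd; subst ha; subst hτ
  rw [hσ1, hσ2]

noncomputable def zmapR (x : {σ : Finset (Cell n) // ZP B j σ}) :
    {σ : Finset (Cell n) // WRP B j σ} ⊕ ({σ : Finset (Cell n) // SP B j σ} × Bool) :=
  if h : (zD x, zB x) ∈ B ∧ zD x < zA x then
    Sum.inr (⟨x.1 ∪ {(zD x, zB x)}, zp_s (zSpec x) h.1⟩, decide (zB x < zC x))
  else Sum.inl ⟨x.1 \ {(zA x, zB x)}, zp_wr (zSpec x)⟩

lemma zmapR_inj : Function.Injective (zmapR (B := B) (j := j)) := by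
  intro x y hxy
  unfold zmapR at hxy
  split_ifs at hxy with h1 h2 h2
  · -- inr / inr
    simp only [Sum.inr.injEq, Prod.mk.injEq, Subtype.mk.injEq] at hxy
    obtain ⟨hS, ht⟩ := hxy
    exact Subtype.ext (z_inr_eq (zSpec x) (zSpec y) hS (decide_eq_decide.mp ht)
      (iff_of_true h1.2 h2.2))
  · -- inl / inl
    simp only [Sum.inl.injEq, Subtype.mk.injEq] at hxy
    have e1 := z_sdiff_ab (zSpec x)
    have e2 := z_sdiff_ab (zSpec y)
    have heq := e1.symm.trans (hxy.trans e2)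
    obtain ⟨hadx, hbcx, hσx, hBx, hnax, hcardx, havx, hjx⟩ := zSpec x
    obtain ⟨hady, hbcy, hσy, hBy, hnay, hcardy, havy, hjy⟩ := zSpec y
    obtain ⟨hb, hc, hτ, hrow⟩ :=
      wr_rep_unique hadx hady hbcx hbcy hnax hnay hcardx havx havy heq
    rcases hrow with ⟨ha, hdd⟩ | ⟨ha, hdd⟩
    · apply Subtype.ext
      have mx : (zA x, zB x) ∈ x.1 := z_mem_ab (zSpec x)
      have my : (zA y, zB y) ∈ y.1 := z_mem_ab (zSpec y)
      calc x.1 = insert (zA x, zB x) (x.1 \ {(zA x, zB x)}) := by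
            rw [Finset.sdiff_singleton_eq_erase, Finset.insert_erase mx]
        _ = insert (zA y, zB y) (y.1 \ {(zA y, zB y)}) := by rw [hxy, ha, hb]
        _ = y.1 := by rw [Finset.sdiff_singleton_eq_erase, Finset.insert_erase my]
    · exfalso
      have hyB : (zA y, zB y) ∈ B := hBy (by simp)
      have hxB : (zA x, zB x) ∈ B := hBx (by simp)
      have hmem : (zD x, zB x) ∈ B := by rw [hdd, hb]; exact hyB
      have hx' : ¬ zD x < zA x := fun hh => h1 ⟨hmem, hh⟩
      have hmem2 : (zD y, zB y) ∈ B := by rw [← ha, ← hb]; exact hxB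
      have hy' : ¬ zD y < zA y := fun hh => h2 ⟨hmem2, hh⟩
      have l1 : zA x < zD x := (not_lt.mp hx').lt_of_ne hadx
      have l2 : zA y < zD y := (not_lt.mp hy').lt_of_ne hady
      rw [hdd] at l1
      rw [← ha] at l2
      exact absurd l1 (lt_asymm l2)

noncomputable def zmapC (x : {σ : Finset (Cell n) // ZP B j σ}) :
    {σ : Finset (Cell n) // WCP B j σ} ⊕ ({σ : Finset (Cell n) // SP B j σ} × Bool) :=
  if h : (zD x, zB x) ∈ B ∧ zB x < zC x then
    Sum.inr (⟨x.1 ∪ {(zD x, zB x)}, zp_s (zSpec x) h.1⟩, decide (zD x < zA x))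
  else Sum.inl ⟨x.1 \ {(zD x, zC x)}, zp_wc (zSpec x)⟩

lemma zmapC_inj : Function.Injective (zmapC (B := B) (j := j)) := by
  intro x y hxy
  unfold zmapC at hxy
  split_ifs at hxy with h1 h2 h2
  · simp only [Sum.inr.injEq, Prod.mk.injEq, Subtype.mk.injEq] at hxy
    obtain ⟨hS, ht⟩ := hxy
    exact Subtype.ext (z_inr_eq (zSpec x) (zSpec y) hS (iff_of_true h1.2 h2.2)
      (decide_eq_decide.mp ht))
  · simp only [Sum.inl.injEq, Subtype.mk.injEq] at hxy
    have e1 := z_sdiff_dc (zSpec x)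
    have e2 := z_sdiff_dc (zSpec y)
    have heq := e1.symm.trans (hxy.trans e2)
    obtain ⟨hadx, hbcx, hσx, hBx, hnax, hcardx, havx, hjx⟩ := zSpec x
    obtain ⟨hady, hbcy, hσy, hBy, hnay, hcardy, havy, hjy⟩ := zSpec y
    obtain ⟨hdd, ha, hτ, hcol⟩ :=
      wc_rep_unique hadx hady hbcx hbcy hnax hnay hcardx havx havy heq
    rcases hcol with ⟨hbb, hcc⟩ | ⟨hbb, hcc⟩
    · apply Subtype.ext
      have mx : (zD x, zC x) ∈ x.1 := z_mem_dc (zSpec x)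
      have my : (zD y, zC y) ∈ y.1 := z_mem_dc (zSpec y)
      calc x.1 = insert (zD x, zC x) (x.1 \ {(zD x, zC x)}) := by
            rw [Finset.sdiff_singleton_eq_erase, Finset.insert_erase mx]
        _ = insert (zD y, zC y) (y.1 \ {(zD y, zC y)}) := by rw [hxy, hdd, hcc]
        _ = y.1 := by rw [Finset.sdiff_singleton_eq_erase, Finset.insert_erase my]
    · exfalso
      have hyB : (zD y, zC y) ∈ B := hBy (by simp)
      have hxB : (zD x, zC x) ∈ B := hBx (by simp)
      have hmem : (zD x, zB x) ∈ B := by rw [hdd, hbb]; exact hyB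
      have hx' : ¬ zB x < zC x := fun hh => h1 ⟨hmem, hh⟩
      have hmem2 : (zD y, zB y) ∈ B := by rw [← hdd, ← hcc]; exact hxB
      have hy' : ¬ zB y < zC y := fun hh => h2 ⟨hmem2, hh⟩
      have l1 : zC x < zB x := (not_lt.mp hx').lt_of_ne (Ne.symm hbcx)
      have l2 : zC y < zB y := (not_lt.mp hy').lt_of_ne (Ne.symm hbcy)
      rw [hbb] at l1
      rw [← hcc] at l2
      exact absurd l1 (lt_asymm l2)

end Maps

lemma hitZ_le_WR (B : Finset (Cell n)) (j : ℤ) :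
    hitZ B j ≤ hitWR B j + 2 * hitS B j := by
  rw [hitZ_eq, hitWR_eq, hitS_eq]
  have key := Nat.card_le_card_of_injective _ (zmapR_inj (B := B) (j := j))
  rw [Nat.card_sum, Nat.card_prod] at key
  have hb : Nat.card Bool = 2 := Nat.card_eq_fintype_card.trans (by simp)
  rw [hb] at key
  omega

lemma hitZ_le_WC (B : Finset (Cell n)) (j : ℤ) :
    hitZ B j ≤ hitWC B j + 2 * hitS B j := by
  rw [hitZ_eq, hitWC_eq, hitS_eq]
  have key := Nat.card_le_card_of_injective _ (zmapC_inj (B := B) (j := j))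
  rw [Nat.card_sum, Nat.card_prod] at key
  have hb : Nat.card Bool = 2 := Nat.card_eq_fintype_card.trans (by simp)
  rw [hb] at key
  omega

/-! ### The S-to-permutation-pairs injection -/

def HP (B : Finset (Cell n)) (i : ℕ) (σ : Finset (Cell n)) : Prop :=
  nonattacking σ ∧ σ.card = n ∧ (σ ∩ B).card = i

lemma hit_eq (B : Finset (Cell n)) (i : ℕ) :
    hit B i = Nat.card {σ : Finset (Cell n) // HP B i σ} := rfl

def SData (B : Finset (Cell n)) (j : ℤ) (a d b c : Fin n) (τ σ : Finset (Cell n)) : Prop :=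
  a ≠ d ∧ b ≠ c ∧ σ = (({a, d} : Finset (Fin n)) ×ˢ ({b, c} : Finset (Fin n))) ∪ τ ∧
      (({a, d} : Finset (Fin n)) ×ˢ ({b, c} : Finset (Fin n))) ⊆ B ∧
      nonattacking τ ∧ τ.card = n - 2 ∧
      (∀ p ∈ τ, p.1 ≠ a ∧ p.1 ≠ d ∧ p.2 ≠ b ∧ p.2 ≠ c) ∧
      ((τ ∩ B).card : ℤ) = j

section SFuncs
variable {B : Finset (Cell n)} {j : ℤ}

noncomputable def sA (x : {σ : Finset (Cell n) // SP B j σ}) : Fin n := x.2.choose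
noncomputable def sD (x : {σ : Finset (Cell n) // SP B j σ}) : Fin n := x.2.choose_spec.choose
noncomputable def sB (x : {σ : Finset (Cell n) // SP B j σ}) : Fin n :=
  x.2.choose_spec.choose_spec.choose
noncomputable def sC (x : {σ : Finset (Cell n) // SP B j σ}) : Fin n :=
  x.2.choose_spec.choose_spec.choose_spec.choose
noncomputable def sT (x : {σ : Finset (Cell n) // SP B j σ}) : Finset (Cell n) :=
  x.2.choose_spec.choose_spec.choose_spec.choose_spec.choose

lemma sSpec (x : {σ : Finset (Cell n) // SP B j σ}) :
    SData B j (sA x) (sD x) (sB x) (sC x) (sT x) x.1 :=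
  x.2.choose_spec.choose_spec.choose_spec.choose_spec.choose_spec

end SFuncs

def TP (B : Finset (Cell n)) (i : ℕ) (p : Finset (Cell n) × Finset (Cell n)) : Prop :=
  HP B i p.1 ∧ p.2 ∈ (p.1 ∩ B).powersetCard 2

lemma pair_min_max {a d : Fin n} : ({a, d} : Finset (Fin n)) = {min a d, max a d} := by
  rcases le_total a d with h | h
  · rw [min_eq_left h, max_eq_right h]
  · rw [min_eq_right h, max_eq_left h, Finset.pair_comm]

lemma s_target {i : ℕ} {a d b c : Fin n} {τ σ : Finset (Cell n)} {B : Finset (Cell n)}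
    (h : SData B ((i : ℤ) - 1) a d b c τ σ) (m : Finset (Cell n))
    (hm : m = ({(min a d, min b c), (max a d, max b c)} : Finset (Cell n)) ∨
      m = {(min a d, max b c), (max a d, min b c)}) :
    TP B (i + 1) (τ ∪ m, m) := by
  obtain ⟨had, hbc, hσ, hB, hna, hcard, hav, hj⟩ := h
  have hn2 : 2 ≤ n := fin_two_le had
  have hr : min a d < max a d := min_lt_max.mpr had
  have hs : min b c < max b c := min_lt_max.mpr hbc
  have hrowmem : ∀ p ∈ m, (p.1 = a ∨ p.1 = d) ∧ (p.2 = b ∨ p.2 = c) := by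
    rcases hm with rfl | rfl <;>
    · intro p hp
      simp only [Finset.mem_insert, Finset.mem_singleton] at hp
      rcases hp with rfl | rfl <;>
        exact ⟨by rcases min_choice a d with h | h <;> rcases max_choice a d with h' | h' <;>
            simp [h, h'],
          by rcases min_choice b c with h | h <;> rcases max_choice b c with h' | h' <;>
            simp [h, h']⟩
  have hmB : ∀ p ∈ m, p ∈ B := by
    intro p hp
    apply hB
    rw [Finset.mem_product]
    obtain ⟨h1, h2⟩ := hrowmem p hp
    constructor <;> simp only [Finset.mem_insert, Finset.mem_singleton] <;> tauto
  have hdisj : Disjoint τ m := by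
    rw [Finset.disjoint_left]
    intro p hpτ hpm
    obtain ⟨h1, h2⟩ := hrowmem p hpm
    rcases h1 with h1 | h1
    · exact (hav p hpτ).1 h1
    · exact (hav p hpτ).2.1 h1
  have hmcard : m.card = 2 := by
    rcases hm with rfl | rfl <;>
      rw [Finset.card_insert_of_notMem (by simp [Prod.ext_iff, hr.ne, hs.ne]),
        Finset.card_singleton]
  have key : ∀ (u v : Cell n), u.1 ≠ v.1 → u.2 ≠ v.2 →
      ∀ p ∈ ({u, v} : Finset (Cell n)), ∀ q ∈ ({u, v} : Finset (Cell n)), p ≠ q →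
        p.1 ≠ q.1 ∧ p.2 ≠ q.2 := by
    intro u v h1 h2 p hp q hq hne
    simp only [Finset.mem_insert, Finset.mem_singleton] at hp hq
    rcases hp with rfl | rfl <;> rcases hq with rfl | rfl
    · exact absurd rfl hne
    · exact ⟨h1, h2⟩
    · exact ⟨fun hh => h1 hh.symm, fun hh => h2 hh.symm⟩
    · exact absurd rfl hne
  have hmne : ∀ p ∈ m, ∀ q ∈ m, p ≠ q → p.1 ≠ q.1 ∧ p.2 ≠ q.2 := by
    rcases hm with rfl | rfl
    · exact key _ _ hr.ne hs.ne
    · exact key _ _ hr.ne hs.ne'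
  have hna' : nonattacking (τ ∪ m) := by
    intro p hp q hq hne
    rcases Finset.mem_union.mp hp with hp' | hp' <;> rcases Finset.mem_union.mp hq with hq' | hq'
    · exact hna p hp' q hq' hne
    · obtain ⟨h1, h2⟩ := hrowmem q hq'
      constructor
      · rcases h1 with h1 | h1 <;> rw [h1]
        · exact (hav p hp').1
        · exact (hav p hp').2.1
      · rcases h2 with h2 | h2 <;> rw [h2]
        · exact (hav p hp').2.2.1
        · exact (hav p hp').2.2.2
    · obtain ⟨h1, h2⟩ := hrowmem p hp'
      constructor
      · rcases h1 with h1 | h1 <;> rw [h1]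
        · exact fun hh => (hav q hq').1 hh.symm
        · exact fun hh => (hav q hq').2.1 hh.symm
      · rcases h2 with h2 | h2 <;> rw [h2]
        · exact fun hh => (hav q hq').2.2.1 hh.symm
        · exact fun hh => (hav q hq').2.2.2 hh.symm
    · exact hmne p hp' q hq' hne
  have hcard' : (τ ∪ m).card = n := by
    rw [Finset.card_union_of_disjoint hdisj, hcard, hmcard]
    omega
  have hint : (τ ∪ m) ∩ B = (τ ∩ B) ∪ m := by
    rw [Finset.union_inter_distrib_right, Finset.inter_eq_left.mpr hmB]
  have hdisj2 : Disjoint (τ ∩ B) m :=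
    Finset.disjoint_of_subset_left (Finset.inter_subset_left) hdisj
  have hcardi : ((τ ∩ B).card : ℤ) + 1 = (i : ℤ) := by omega
  have hcardi' : (τ ∩ B).card + 1 = i := by exact_mod_cast hcardi
  have hhits : ((τ ∪ m) ∩ B).card = i + 1 := by
    rw [hint, Finset.card_union_of_disjoint hdisj2, hmcard]
    omega
  refine ⟨⟨hna', hcard', hhits⟩, Finset.mem_powersetCard.mpr ⟨?_, hmcard⟩⟩
  intro p hp
  rw [Finset.mem_inter]
  exact ⟨Finset.mem_union_right _ hp, hmB p hp⟩


lemma m_rowmem {a d b c : Fin n} {m : Finset (Cell n)}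
    (hm : m = ({(min a d, min b c), (max a d, max b c)} : Finset (Cell n)) ∨
      m = {(min a d, max b c), (max a d, min b c)}) :
    ∀ p ∈ m, (p.1 = a ∨ p.1 = d) ∧ (p.2 = b ∨ p.2 = c) := by
  rcases hm with rfl | rfl <;>
  · intro p hp
    simp only [Finset.mem_insert, Finset.mem_singleton] at hp
    rcases hp with rfl | rfl <;>
      exact ⟨by rcases min_choice a d with h | h <;> rcases max_choice a d with h' | h' <;>
          simp [h, h'],
        by rcases min_choice b c with h | h <;> rcases max_choice b c with h' | h' <;>
          simp [h, h']⟩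

lemma m_images {a d b c : Fin n} {m : Finset (Cell n)}
    (hm : m = ({(min a d, min b c), (max a d, max b c)} : Finset (Cell n)) ∨
      m = {(min a d, max b c), (max a d, min b c)}) :
    m.image Prod.fst = {min a d, max a d} ∧ m.image Prod.snd = {min b c, max b c} := by
  rcases hm with rfl | rfl <;> constructor <;>
  · ext y
    simp only [Finset.mem_image, Finset.mem_insert, Finset.mem_singleton, Prod.exists]
    constructor
    · rintro ⟨u, v, (h | h), rfl⟩ <;> simp_all [Prod.ext_iff] <;> tauto
    · rintro (rfl | rfl) <;> [skip; skip] <;> first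
        | exact ⟨_, _, Or.inl rfl, rfl⟩
        | exact ⟨_, _, Or.inr rfl, rfl⟩

lemma s_disj {B : Finset (Cell n)} {j : ℤ} {a d b c : Fin n} {τ σ m : Finset (Cell n)}
    (h : SData B j a d b c τ σ)
    (hm : m = ({(min a d, min b c), (max a d, max b c)} : Finset (Cell n)) ∨
      m = {(min a d, max b c), (max a d, min b c)}) :
    Disjoint τ m := by
  obtain ⟨had, hbc, hσ, hB, hna, hcard, hav, hj⟩ := h
  rw [Finset.disjoint_left]
  intro p hpτ hpm
  obtain ⟨h1, h2⟩ := m_rowmem hm p hpm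
  rcases h1 with h1 | h1
  · exact (hav p hpτ).1 h1
  · exact (hav p hpτ).2.1 h1

lemma s_core {i : ℕ} {B : Finset (Cell n)} {a1 d1 b1 c1 a2 d2 b2 c2 : Fin n}
    {τ1 τ2 σ1 σ2 m1 m2 : Finset (Cell n)}
    (h1 : SData B ((i : ℤ) - 1) a1 d1 b1 c1 τ1 σ1)
    (h2 : SData B ((i : ℤ) - 1) a2 d2 b2 c2 τ2 σ2)
    (hm1 : m1 = ({(min a1 d1, min b1 c1), (max a1 d1, max b1 c1)} : Finset (Cell n)) ∨
      m1 = {(min a1 d1, max b1 c1), (max a1 d1, min b1 c1)})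
    (hm2 : m2 = ({(min a2 d2, min b2 c2), (max a2 d2, max b2 c2)} : Finset (Cell n)) ∨
      m2 = {(min a2 d2, max b2 c2), (max a2 d2, min b2 c2)})
    (hπ : τ1 ∪ m1 = τ2 ∪ m2) (hmm : m1 = m2) :
    σ1 = σ2 ∧ min a1 d1 = min a2 d2 ∧ max a1 d1 = max a2 d2 ∧
      min b1 c1 = min b2 c2 ∧ max b1 c1 = max b2 c2 := by
  have hr1 : min a1 d1 < max a1 d1 := min_lt_max.mpr h1.1
  have hr2 : min a2 d2 < max a2 d2 := min_lt_max.mpr h2.1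
  have hs1 : min b1 c1 < max b1 c1 := min_lt_max.mpr h1.2.1
  have hs2 : min b2 c2 < max b2 c2 := min_lt_max.mpr h2.2.1
  obtain ⟨hf1, hg1⟩ := m_images hm1
  obtain ⟨hf2, hg2⟩ := m_images hm2
  have hfr : ({min a1 d1, max a1 d1} : Finset (Fin n)) = {min a2 d2, max a2 d2} := by
    rw [← hf1, hmm, hf2]
  have hgr : ({min b1 c1, max b1 c1} : Finset (Fin n)) = {min b2 c2, max b2 c2} := by
    rw [← hg1, hmm, hg2]
  obtain ⟨e1, e2⟩ := pair_eq_of_lt_iff hr1.ne hr2.ne hfr (iff_of_true hr1 hr2)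
  obtain ⟨e3, e4⟩ := pair_eq_of_lt_iff hs1.ne hs2.ne hgr (iff_of_true hs1 hs2)
  have hd1 := s_disj h1 hm1
  have hd2 := s_disj h2 hm2
  have hτeq : τ1 = τ2 := by
    rw [← Finset.union_sdiff_cancel_right hd1, hπ, hmm, Finset.union_sdiff_cancel_right hd2]
  have hrowseq : ({a1, d1} : Finset (Fin n)) = {a2, d2} := by
    rw [pair_min_max (a := a1) (d := d1), pair_min_max (a := a2) (d := d2), e1, e2]
  have hcolseq : ({b1, c1} : Finset (Fin n)) = {b2, c2} := by
    rw [pair_min_max (a := b1) (d := c1), pair_min_max (a := b2) (d := c2), e3, e4]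
  refine ⟨?_, e1, e2, e3, e4⟩
  rw [h1.2.2.1, h2.2.2.1, hτeq, hrowseq, hcolseq]

variable {B : Finset (Cell n)}

noncomputable def smap (i : ℕ) :
    {σ : Finset (Cell n) // SP B ((i : ℤ) - 1) σ} × Bool →
      {p : Finset (Cell n) × Finset (Cell n) // TP B (i + 1) p}
  | (x, true) =>
    ⟨(sT x ∪ {(min (sA x) (sD x), min (sB x) (sC x)),
        (max (sA x) (sD x), max (sB x) (sC x))}, _),
      s_target (sSpec x) _ (Or.inl rfl)⟩
  | (x, false) =>
    ⟨(sT x ∪ {(min (sA x) (sD x), max (sB x) (sC x)),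
        (max (sA x) (sD x), min (sB x) (sC x))}, _),
      s_target (sSpec x) _ (Or.inr rfl)⟩

lemma smap_inj (i : ℕ) : Function.Injective (smap (B := B) i) := by
  rintro ⟨x, t1⟩ ⟨y, t2⟩ h
  cases t1 <;> cases t2 <;>
    simp only [smap, reduceIte, Subtype.mk.injEq, Prod.mk.injEq] at h
  · -- false / false
    obtain ⟨hσeq, _⟩ := s_core (sSpec x) (sSpec y) (Or.inr rfl) (Or.inr rfl) h.1 h.2
    rw [Subtype.ext hσeq]
  · -- false / true : mixed
    exfalso
    obtain ⟨_, e1, e2, e3, e4⟩ := s_core (sSpec x) (sSpec y) (Or.inr rfl) (Or.inl rfl) h.1 h.2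
    have hr1 : min (sA x) (sD x) < max (sA x) (sD x) := min_lt_max.mpr (sSpec x).1
    have hs1 : min (sB x) (sC x) < max (sB x) (sC x) := min_lt_max.mpr (sSpec x).2.1
    have hm := h.2
    rw [← e1, ← e2, ← e3, ← e4] at hm
    have hmem : ((min (sA x) (sD x)), (max (sB x) (sC x))) ∈
        ({((min (sA x) (sD x)), (min (sB x) (sC x))),
          ((max (sA x) (sD x)), (max (sB x) (sC x)))} : Finset (Cell n)) := by
      rw [← hm]; simp
    simp only [Finset.mem_insert, Finset.mem_singleton, Prod.mk.injEq] at hmem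
    rcases hmem with ⟨_, h'⟩ | ⟨h', _⟩
    · exact hs1.ne h'.symm
    · exact hr1.ne h'
  · -- true / false : mixed
    exfalso
    obtain ⟨_, e1, e2, e3, e4⟩ := s_core (sSpec x) (sSpec y) (Or.inl rfl) (Or.inr rfl) h.1 h.2
    have hr1 : min (sA x) (sD x) < max (sA x) (sD x) := min_lt_max.mpr (sSpec x).1
    have hs1 : min (sB x) (sC x) < max (sB x) (sC x) := min_lt_max.mpr (sSpec x).2.1
    have hm := h.2
    rw [← e1, ← e2, ← e3, ← e4] at hm
    have hmem : ((min (sA x) (sD x)), (min (sB x) (sC x))) ∈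
        ({((min (sA x) (sD x)), (max (sB x) (sC x))),
          ((max (sA x) (sD x)), (min (sB x) (sC x)))} : Finset (Cell n)) := by
      rw [← hm]; simp
    simp only [Finset.mem_insert, Finset.mem_singleton, Prod.mk.injEq] at hmem
    rcases hmem with ⟨_, h'⟩ | ⟨h', _⟩
    · exact hs1.ne h'
    · exact hr1.ne h'
  · -- true / true
    obtain ⟨hσeq, _⟩ := s_core (sSpec x) (sSpec y) (Or.inl rfl) (Or.inl rfl) h.1 h.2
    rw [Subtype.ext hσeq]

lemma card_TP (B : Finset (Cell n)) (i : ℕ) :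
    Nat.card {p : Finset (Cell n) × Finset (Cell n) // TP B i p} = hit B i * i.choose 2 := by
  classical
  have e : {p : Finset (Cell n) × Finset (Cell n) // TP B i p} ≃
      Σ σ : {σ : Finset (Cell n) // HP B i σ}, {m : Finset (Cell n) // m ∈ (σ.1 ∩ B).powersetCard 2} :=
    { toFun := fun x => ⟨⟨x.1.1, x.2.1⟩, ⟨x.1.2, x.2.2⟩⟩
      invFun := fun y => ⟨(y.1.1, y.2.1), ⟨y.1.2, y.2.2⟩⟩
      left_inv := fun x => rfl
      right_inv := fun y => rfl }
  rw [Nat.card_congr e, Nat.card_eq_fintype_card, Fintype.card_sigma]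
  have hs : ∀ σ : {σ : Finset (Cell n) // HP B i σ},
      Fintype.card {m : Finset (Cell n) // m ∈ (σ.1 ∩ B).powersetCard 2} = i.choose 2 := by
    intro σ
    rw [Fintype.card_coe, Finset.card_powersetCard, σ.2.2.2]
  rw [Finset.sum_congr rfl (fun σ _ => hs σ), Finset.sum_const, smul_eq_mul, hit_eq,
    Nat.card_eq_fintype_card, Finset.card_univ]

lemma two_hitS_le (B : Finset (Cell n)) (i : ℕ) :
    2 * hitS B ((i : ℤ) - 1) ≤ (i + 1).choose 2 * hit B (i + 1) := by
  have key := Nat.card_le_card_of_injective _ (smap_inj (B := B) i)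
  rw [Nat.card_prod, (Nat.card_eq_fintype_card.trans (by simp) : Nat.card Bool = 2),
    card_TP] at key
  rw [hitS_eq]
  calc 2 * Nat.card {σ : Finset (Cell n) // SP B ((i : ℤ) - 1) σ}
      = Nat.card {σ : Finset (Cell n) // SP B ((i : ℤ) - 1) σ} * 2 := mul_comm _ _
    _ ≤ hit B (i + 1) * (i + 1).choose 2 := key
    _ = (i + 1).choose 2 * hit B (i + 1) := mul_comm _ _

end SC

/-- For a square board `B ⊆ [n]×[n]` and `i ≥ 0`:
`h_{WR,i−1} + h_{WC,i−1} − 2h_{Z,i−1} + 2h_{S,i−1} + (i(i+1)/2)·h_{i+1} ≥ 0`. -/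
theorem square_chain_inequality_one {n : ℕ} (B : Finset (Fin n × Fin n)) (i : ℕ) :
    (0 : ℚ) ≤ (hitWR B ((i : ℤ) - 1) : ℚ) + (hitWC B ((i : ℤ) - 1) : ℚ) -
      2 * (hitZ B ((i : ℤ) - 1) : ℚ) + 2 * (hitS B ((i : ℤ) - 1) : ℚ) +
      ((i : ℚ) * ((i : ℚ) + 1) / 2) * (hit B (i + 1) : ℚ) := by
  have h1 := SC.hitZ_le_WR B ((i : ℤ) - 1)
  have h2 := SC.hitZ_le_WC B ((i : ℤ) - 1)
  have h3 := SC.two_hitS_le B i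
  have hc : (((i + 1).choose 2 : ℕ) : ℚ) = (i : ℚ) * ((i : ℚ) + 1) / 2 := by
    rw [Nat.cast_choose_two]
    push_cast
    ring
  have q1 : (hitZ B ((i : ℤ) - 1) : ℚ) ≤
      (hitWR B ((i : ℤ) - 1) : ℚ) + 2 * (hitS B ((i : ℤ) - 1) : ℚ) := by exact_mod_cast h1
  have q2 : (hitZ B ((i : ℤ) - 1) : ℚ) ≤
      (hitWC B ((i : ℤ) - 1) : ℚ) + 2 * (hitS B ((i : ℤ) - 1) : ℚ) := by exact_mod_cast h2
  have q3 : 2 * (hitS B ((i : ℤ) - 1) : ℚ) ≤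
      (((i + 1).choose 2 : ℕ) : ℚ) * (hit B (i + 1) : ℚ) := by exact_mod_cast h3
  rw [hc] at q3
  linarith
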